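/- Fix a radius r with 0 < r and r·α_j < 1 for all 1 ≤ j ≤ t₁, and for an integer j ≥ 0 and y₀ ∈ ℤ define Ψ_j[y₀](x) = (1/(2πi))∮_{|w|=r} (1−w)^{j} · 2^{y₀-x} · w^{-(x+j+1-y₀)} · f_{α,β,γ}(w,t) dw. Then Ψ_j[y₀](z) = 0 whenever z ≤ y₀ − j − 1, and for all integers m, n, k with 1 ≤ m < n and 0 ≤ k ≤ m, and all x, y₀ ∈ ℤ: Σ_{z∈ℤ} Q^{n-m}(x,z) · Ψ_{n-k}[y₀](z) = Ψ_{m-k}[y₀](x), the sum having only finitely many nonzero terms. -/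

import Mathlib

/-- `(1/(2πi)) ∮_{|w|=r} F(w) dw`, the normalized contour integral over the
positively oriented circle of radius `r` centered at `0` in `ℂ`. -/
noncomputable def cInt (r : ℝ) (F : ℂ → ℂ) : ℂ :=
  (2 * (Real.pi : ℂ) * Complex.I)⁻¹ * ∮ w in C(0, r), F w

/-- The function `f_{α,β,γ}(w,t) = ∏_{j=1}^{t₁} (1−α_j)/(1−α_j w) ·
∏_{j=t₁+1}^{t₁+t₂} (1+β_j w)/(1+β_j) · exp(γ t₃ (w−1))`. -/
noncomputable def fabc (t₁ t₂ : ℕ) (t₃ γ : ℝ) (α β : ℕ → ℝ) (w : ℂ) : ℂ :=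
  (∏ j ∈ Finset.Icc 1 t₁, (1 - (α j : ℂ)) / (1 - (α j : ℂ) * w)) *
  (∏ j ∈ Finset.Icc (t₁ + 1) (t₁ + t₂), (1 + (β j : ℂ) * w) / (1 + (β j : ℂ))) *
  Complex.exp ((γ : ℂ) * (t₃ : ℂ) * (w - 1))

/-- `Ψ_j[y₀](x) = (1/(2πi))∮_{|w|=r} (1−w)^j 2^{y₀-x} w^{-(x+j+1-y₀)} f_{α,β,γ}(w,t) dw`. -/
noncomputable def Psi (t₁ t₂ : ℕ) (t₃ γ : ℝ) (α β : ℕ → ℝ) (r : ℝ)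
    (j : ℕ) (y₀ x : ℤ) : ℂ :=
  cInt r (fun w =>
    (1 - w) ^ (j : ℤ) * (2 : ℂ) ^ (y₀ - x) * w ^ (-(x + (j : ℤ) + 1 - y₀)) *
    fabc t₁ t₂ t₃ γ α β w)

/-- The `m`-fold convolution power of `Q`:
`Q^m(x,z) = 2^{-(x-z)} binom(x-z-1, m-1) 1_{x ≥ z+m}`. -/
noncomputable def Qp (m : ℕ) (x z : ℤ) : ℝ :=
  if z + m ≤ x then (2 : ℝ) ^ (z - x) * ((x - z - 1).toNat.choose (m - 1) : ℝ) else 0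

open Complex Metric Finset

section Aux

variable (t₁ t₂ : ℕ) (t₃ γ : ℝ) (α β : ℕ → ℝ) (r : ℝ)

noncomputable def ker (j : ℕ) (y₀ x : ℤ) (w : ℂ) : ℂ :=
  (1 - w) ^ j * (2 : ℂ) ^ (y₀ - x) * w ^ (-(x + (j : ℤ) + 1 - y₀)) *
    fabc t₁ t₂ t₃ γ α β w

lemma Psi_eq (j : ℕ) (y₀ x : ℤ) :
    Psi t₁ t₂ t₃ γ α β r j y₀ x = cInt r (ker t₁ t₂ t₃ γ α β j y₀ x) := by
  simp only [Psi, ker, cInt, zpow_natCast]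

variable {α r}

lemma fabc_diffOn (hα : ∀ j ∈ Finset.Icc 1 t₁, 0 ≤ α j)
    (hrα : ∀ j ∈ Finset.Icc 1 t₁, r * α j < 1) :
    DifferentiableOn ℂ (fabc t₁ t₂ t₃ γ α β) (closedBall 0 r) := by
  apply DifferentiableOn.mul
  apply DifferentiableOn.mul
  · apply DifferentiableOn.fun_finset_prod
    intro j hj
    apply DifferentiableOn.div (differentiableOn_const _)
    · exact (differentiableOn_const _).sub ((differentiableOn_const _).mul differentiableOn_id)
    · intro w hw heq
      have h1 : (α j : ℂ) * w = 1 := by linear_combination -heq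
      have h2 : ‖(α j : ℂ) * w‖ = 1 := by rw [h1]; simp
      rw [norm_mul, Complex.norm_real, Real.norm_eq_abs, _root_.abs_of_nonneg (hα j hj)] at h2
      have hle : ‖w‖ ≤ r := by
        rwa [mem_closedBall, Complex.dist_eq, sub_zero] at hw
      have := hrα j hj
      nlinarith [mul_le_mul_of_nonneg_left hle (hα j hj)]
  · apply DifferentiableOn.fun_finset_prod
    intro j hj
    exact ((differentiableOn_const _).add
      ((differentiableOn_const _).mul differentiableOn_id)).div_const _
  · exact (Differentiable.cexp (by fun_prop)).differentiableOn

lemma cInt_eq_zero {F : ℂ → ℂ} (hr : 0 ≤ r) (h : DifferentiableOn ℂ F (closedBall 0 r)) :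
    cInt r F = 0 := by
  rw [cInt, circleIntegral_eq_zero_of_differentiable_on_off_countable hr Set.countable_empty
    h.continuousOn (fun z hz => h.differentiableAt (closedBall_mem_nhds_of_mem hz.1)), mul_zero]

lemma psi_zero (hr : 0 < r) (hα : ∀ j ∈ Finset.Icc 1 t₁, 0 ≤ α j)
    (hrα : ∀ j ∈ Finset.Icc 1 t₁, r * α j < 1)
    (j : ℕ) (y₀ z : ℤ) (hz : z ≤ y₀ - j - 1) :
    Psi t₁ t₂ t₃ γ α β r j y₀ z = 0 := by
  rw [Psi_eq]
  apply cInt_eq_zero hr.le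
  have he : 0 ≤ -(z + (j : ℤ) + 1 - y₀) := by omega
  have hker : ker t₁ t₂ t₃ γ α β j y₀ z = fun w =>
      (1 - w) ^ j * (2 : ℂ) ^ (y₀ - z) * w ^ ((-(z + (j : ℤ) + 1 - y₀)).toNat) *
        fabc t₁ t₂ t₃ γ α β w := by
    funext w
    unfold ker
    rw [← zpow_natCast w, Int.toNat_of_nonneg he]
  rw [hker]
  apply DifferentiableOn.mul _ (fabc_diffOn t₁ t₂ t₃ γ β hα hrα)
  fun_prop

end Aux
section B
variable {r : ℝ}

lemma cInt_const_mul (c : ℂ) (F : ℂ → ℂ) :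
    cInt r (fun w => c * F w) = c * cInt r F := by
  unfold cInt; rw [circleIntegral.integral_const_mul]; ring

lemma cInt_sum {ι : Type*} (s : Finset ι) {G : ι → ℂ → ℂ}
    (h : ∀ i ∈ s, CircleIntegrable (G i) 0 r) :
    cInt r (fun w => ∑ i ∈ s, G i w) = ∑ i ∈ s, cInt r (G i) := by
  unfold cInt
  rw [← Finset.mul_sum]
  congr 1
  simp only [circleIntegral]
  rw [← intervalIntegral.integral_finset_sum (fun i hi => (h i hi).out)]
  congr 1
  funext θ
  rw [Finset.smul_sum]

lemma cInt_sub {F G : ℂ → ℂ} (hF : CircleIntegrable F 0 r) (hG : CircleIntegrable G 0 r) :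
    cInt r (fun w => F w - G w) = cInt r F - cInt r G := by
  unfold cInt
  rw [circleIntegral.integral_sub hF hG]; ring

lemma cInt_congr (hr : 0 ≤ r) {F G : ℂ → ℂ} (h : Set.EqOn F G (sphere (0:ℂ) r)) :
    cInt r F = cInt r G := by
  unfold cInt
  rw [circleIntegral.integral_congr hr h]

end B

lemma geom_Icc (w : ℂ) (hw : w ≠ 0) (E a : ℤ) :
    ∀ n : ℕ, (1 - w) * ∑ z ∈ Finset.Icc a (a + n - 1), w ^ (E - z)
      = w ^ (E - (a + n - 1)) - w ^ (E - a + 1)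
  | 0 => by
    rw [Finset.Icc_eq_empty (by omega)]
    simp only [Finset.sum_empty, mul_zero, Nat.cast_zero]
    rw [show E - (a + 0 - 1) = E - a + 1 by ring, sub_self]
  | (n+1) => by
    have hins : Finset.Icc a (a + (n+1 : ℕ) - 1) = insert (a + n) (Finset.Icc a (a + n - 1)) := by
      ext z
      simp only [Finset.mem_Icc, Finset.mem_insert]
      push_cast
      omega
    rw [hins, Finset.sum_insert (by simp only [Finset.mem_Icc]; omega), mul_add,
      geom_Icc w hw E a n]
    have h1 : w ^ (E - (a + n - 1)) = w * w ^ (E - (a + n)) := by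
      rw [show E - (a + n - 1) = (E - (a + n)) + 1 by ring, zpow_add_one₀ hw]; ring
    rw [h1, show E - (a + ((n+1 : ℕ):ℤ) - 1) = E - (a + (n:ℤ)) by push_cast; ring]
    ring

section E
variable (t₁ t₂ : ℕ) (t₃ γ : ℝ) (β : ℕ → ℝ) {α : ℕ → ℝ} {r : ℝ}

lemma ker_sum {w : ℂ} (hw : w ≠ 0) (j : ℕ) (x y₀ : ℤ) (hx : y₀ - j ≤ x) :
    ∑ z ∈ Finset.Icc (y₀ - ((j:ℤ)+1)) (x - 1),
        (2:ℂ)^(z - x) * ker t₁ t₂ t₃ γ α β (j+1) y₀ z w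
      = ker t₁ t₂ t₃ γ α β j y₀ x w
        - (2:ℂ)^(y₀ - x) * ((1 - w)^j * fabc t₁ t₂ t₃ γ α β w) := by
  have hstep : ∀ z ∈ Finset.Icc (y₀ - ((j:ℤ)+1)) (x - 1),
      (2:ℂ)^(z - x) * ker t₁ t₂ t₃ γ α β (j+1) y₀ z w
        = ((1-w)^(j+1) * ((2:ℂ)^(y₀ - x) * fabc t₁ t₂ t₃ γ α β w))
          * w ^ ((y₀ - (j:ℤ) - 2) - z) := by
    intro z _
    unfold ker
    have h2 : (2:ℂ)^(z-x) * (2:ℂ)^(y₀-z) = (2:ℂ)^(y₀-x) := by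
      rw [← zpow_add₀ (two_ne_zero)]; congr 1; ring
    rw [show -(z + ((j+1:ℕ):ℤ) + 1 - y₀) = (y₀ - (j:ℤ) - 2) - z by push_cast; ring]
    linear_combination ((1-w)^(j+1) * w^((y₀-(j:ℤ)-2)-z) * fabc t₁ t₂ t₃ γ α β w) * h2
  rw [Finset.sum_congr rfl hstep, ← Finset.mul_sum]
  obtain ⟨n, hb⟩ : ∃ n : ℕ, x - 1 = (y₀ - ((j:ℤ)+1)) + n - 1 :=
    ⟨(x - y₀ + j + 1).toNat, by omega⟩
  rw [hb]
  have hfact : ((1-w)^(j+1) * ((2:ℂ)^(y₀ - x) * fabc t₁ t₂ t₃ γ α β w))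
      * ∑ z ∈ Finset.Icc (y₀ - ((j:ℤ)+1)) (y₀ - ((j:ℤ)+1) + n - 1),
          w ^ ((y₀ - (j:ℤ) - 2) - z)
      = ((1-w)^j * ((2:ℂ)^(y₀ - x) * fabc t₁ t₂ t₃ γ α β w))
        * ((1 - w) * ∑ z ∈ Finset.Icc (y₀ - ((j:ℤ)+1)) (y₀ - ((j:ℤ)+1) + n - 1),
            w ^ ((y₀ - (j:ℤ) - 2) - z)) := by
    rw [pow_succ]; ring
  rw [hfact, geom_Icc w hw _ _ n, ← hb,
    show (y₀ - (j:ℤ) - 2) - (x - 1) = -(x + (j:ℤ) + 1 - y₀) by ring,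
    show (y₀ - (j:ℤ) - 2) - (y₀ - ((j:ℤ)+1)) + 1 = 0 by ring, zpow_zero]
  unfold ker
  ring

lemma ker_contOn (hα : ∀ j ∈ Finset.Icc 1 t₁, 0 ≤ α j)
    (hrα : ∀ j ∈ Finset.Icc 1 t₁, r * α j < 1) (hr : 0 < r) (j : ℕ) (y₀ x : ℤ) :
    ContinuousOn (ker t₁ t₂ t₃ γ α β j y₀ x) (sphere (0:ℂ) r) := by
  intro w hw
  have hw0 : w ≠ 0 := by
    rw [mem_sphere_zero_iff_norm] at hw
    intro h; rw [h, norm_zero] at hw; exact hr.ne hw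
  unfold ker
  apply ContinuousWithinAt.mul
  apply ContinuousWithinAt.mul
  apply ContinuousWithinAt.mul
  · exact ContinuousAt.continuousWithinAt (by fun_prop)
  · exact continuousWithinAt_const
  · exact (continuousAt_zpow₀ w _ (Or.inl hw0)).continuousWithinAt
  · exact ((fabc_diffOn t₁ t₂ t₃ γ β hα hrα).continuousOn.mono
      sphere_subset_closedBall) w hw

lemma base (hr : 0 < r) (hα : ∀ j ∈ Finset.Icc 1 t₁, 0 ≤ α j)
    (hrα : ∀ j ∈ Finset.Icc 1 t₁, r * α j < 1) (j : ℕ) (x y₀ : ℤ) :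
    ∑' z : ℤ, (Qp 1 x z : ℂ) * Psi t₁ t₂ t₃ γ α β r (j+1) y₀ z
      = Psi t₁ t₂ t₃ γ α β r j y₀ x := by
  have hvanish : ∀ z ∉ Finset.Icc (y₀ - ((j:ℤ)+1)) (x-1),
      (Qp 1 x z : ℂ) * Psi t₁ t₂ t₃ γ α β r (j+1) y₀ z = 0 := by
    intro z hz
    rw [Finset.mem_Icc] at hz
    push_neg at hz
    rcases le_or_gt z (x-1) with h | h
    · rw [psi_zero t₁ t₂ t₃ γ β hr hα hrα (j+1) y₀ z (by push_cast; omega), mul_zero]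
    · have : Qp 1 x z = 0 := by unfold Qp; rw [if_neg (by push_cast; omega)]
      rw [this]; simp
  rw [tsum_eq_sum hvanish]
  rcases le_or_gt (y₀ - (j:ℤ)) x with hx | hx
  · have hsummand : ∀ z ∈ Finset.Icc (y₀ - ((j:ℤ)+1)) (x-1),
        (Qp 1 x z : ℂ) * Psi t₁ t₂ t₃ γ α β r (j+1) y₀ z
          = cInt r (fun w => (2:ℂ)^(z-x) * ker t₁ t₂ t₃ γ α β (j+1) y₀ z w) := by
      intro z hz
      rw [Finset.mem_Icc] at hz
      have hq : Qp 1 x z = (2:ℝ)^(z-x) := by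
        unfold Qp; rw [if_pos (by push_cast; omega)]; simp
      rw [hq, Psi_eq, cInt_const_mul, Complex.ofReal_zpow]
      norm_num
    rw [Finset.sum_congr rfl hsummand,
      ← cInt_sum _ (fun z _ => (continuousOn_const.fun_mul
        (ker_contOn t₁ t₂ t₃ γ β hα hrα hr (j+1) y₀ z)).circleIntegrable hr.le)]
    have hEq : Set.EqOn
        (fun w => ∑ z ∈ Finset.Icc (y₀ - ((j:ℤ)+1)) (x-1),
          (2:ℂ)^(z-x) * ker t₁ t₂ t₃ γ α β (j+1) y₀ z w)
        (fun w => ker t₁ t₂ t₃ γ α β j y₀ x w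
          - (2:ℂ)^(y₀ - x) * ((1 - w)^j * fabc t₁ t₂ t₃ γ α β w))
        (sphere (0:ℂ) r) := by
      intro w hw
      have hw0 : w ≠ 0 := by
        rw [mem_sphere_zero_iff_norm] at hw
        intro h; rw [h, norm_zero] at hw; exact hr.ne hw
      exact ker_sum t₁ t₂ t₃ γ β hw0 j x y₀ hx
    have hholC : ContinuousOn
        (fun w : ℂ => (2:ℂ)^(y₀ - x) * ((1 - w)^j * fabc t₁ t₂ t₃ γ α β w))
        (sphere (0:ℂ) r) :=
      continuousOn_const.mul ((by fun_prop : ContinuousOn (fun w : ℂ => (1-w)^j)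
        (sphere (0:ℂ) r)).mul ((fabc_diffOn t₁ t₂ t₃ γ β hα hrα).continuousOn.mono
          sphere_subset_closedBall))
    rw [cInt_congr hr.le hEq,
      cInt_sub ((ker_contOn t₁ t₂ t₃ γ β hα hrα hr j y₀ x).circleIntegrable hr.le)
        (hholC.circleIntegrable hr.le),
      cInt_eq_zero hr.le (DifferentiableOn.fun_mul (differentiableOn_const _)
        (DifferentiableOn.fun_mul (by fun_prop) (fabc_diffOn t₁ t₂ t₃ γ β hα hrα))),
      sub_zero, Psi_eq]
  · rw [Finset.Icc_eq_empty (by omega), Finset.sum_empty]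
    exact (psi_zero t₁ t₂ t₃ γ β hr hα hrα j y₀ x (by omega)).symm

end E

lemma Qp_succ (p : ℕ) (hp : 1 ≤ p) (x z : ℤ) :
    Qp (p+1) x z = ∑ y ∈ Finset.Icc (z + (p:ℤ)) (x - 1), Qp 1 x y * Qp p y z := by
  rcases le_or_gt (z + (p:ℤ) + 1) x with h | h
  · have hsummand : ∀ y ∈ Finset.Icc (z + (p:ℤ)) (x-1), Qp 1 x y * Qp p y z
        = (2:ℝ)^(z - x) * ((y - z - 1).toNat.choose (p-1) : ℝ) := by
      intro y hy
      rw [Finset.mem_Icc] at hy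
      unfold Qp
      rw [if_pos (by push_cast; omega), if_pos (by push_cast; omega)]
      simp only [Nat.sub_self, Nat.choose_zero_right, Nat.cast_one, mul_one]
      rw [← mul_assoc, ← zpow_add₀ (two_ne_zero)]
      congr 2
      ring
    rw [Finset.sum_congr rfl hsummand, ← Finset.mul_sum]
    have hre : ∑ y ∈ Finset.Icc (z + (p:ℤ)) (x-1), ((y - z - 1).toNat.choose (p-1) : ℝ)
        = ∑ u ∈ Finset.Icc (p-1) ((x - z - 2).toNat), (u.choose (p-1) : ℝ) := by
      apply Finset.sum_nbij' (i := fun y => (y - z - 1).toNat) (j := fun u => z + 1 + (u:ℤ))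
      · intro a ha; rw [Finset.mem_Icc] at *; omega
      · intro a ha; rw [Finset.mem_Icc] at *; omega
      · intro a ha; rw [Finset.mem_Icc] at ha; omega
      · intro a ha; rw [Finset.mem_Icc] at ha; omega
      · intro a ha; rfl
    rw [hre, ← Nat.cast_sum, Nat.sum_Icc_choose]
    unfold Qp
    rw [if_pos (by push_cast; omega)]
    congr 3
    all_goals omega
  · rw [Finset.Icc_eq_empty (by omega), Finset.sum_empty]
    unfold Qp; rw [if_neg (by push_cast; omega)]

lemma key (t₁ t₂ : ℕ) (t₃ γ : ℝ) (β : ℕ → ℝ) {α : ℕ → ℝ} {r : ℝ}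
    (hr : 0 < r) (hα : ∀ j ∈ Finset.Icc 1 t₁, 0 ≤ α j)
    (hrα : ∀ j ∈ Finset.Icc 1 t₁, r * α j < 1) :
    ∀ p : ℕ, 1 ≤ p → ∀ j : ℕ, p ≤ j → ∀ x y₀ : ℤ,
      ∑' z : ℤ, (Qp p x z : ℂ) * Psi t₁ t₂ t₃ γ α β r j y₀ z
        = Psi t₁ t₂ t₃ γ α β r (j - p) y₀ x := by
  intro p hp
  induction p, hp using Nat.le_induction with
  | base =>
    intro j hj x y₀
    obtain ⟨j', rfl⟩ : ∃ j', j = j' + 1 := ⟨j - 1, by omega⟩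
    simpa using base t₁ t₂ t₃ γ β hr hα hrα j' x y₀
  | succ p hp IH =>
    intro j hj x y₀
    set S := Finset.Icc (y₀ - (j:ℤ)) (x - (p:ℤ) - 1) with hS
    set T := Finset.Icc (y₀ - (j:ℤ) + p) (x - 1) with hT
    have hvan : ∀ z ∉ S, (Qp (p+1) x z : ℂ) * Psi t₁ t₂ t₃ γ α β r j y₀ z = 0 := by
      intro z hz
      rw [hS, Finset.mem_Icc] at hz
      push_neg at hz
      rcases le_or_gt z (x - (p:ℤ) - 1) with h | h
      · rw [psi_zero t₁ t₂ t₃ γ β hr hα hrα j y₀ z (by omega), mul_zero]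
      · have h0 : Qp (p+1) x z = 0 := by unfold Qp; rw [if_neg (by push_cast; omega)]
        rw [h0]; simp
    rw [tsum_eq_sum hvan]
    have h2 : ∀ z ∈ S, (Qp (p+1) x z : ℂ) * Psi t₁ t₂ t₃ γ α β r j y₀ z
        = ∑ y ∈ T, (Qp 1 x y : ℂ) * ((Qp p y z : ℂ) * Psi t₁ t₂ t₃ γ α β r j y₀ z) := by
      intro z hz
      rw [hS, Finset.mem_Icc] at hz
      rw [Qp_succ p hp x z]
      push_cast
      rw [Finset.sum_mul]
      have hsub : Finset.Icc (z + (p:ℤ)) (x-1) ⊆ T := by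
        rw [hT]; exact Finset.Icc_subset_Icc (by omega) le_rfl
      rw [Finset.sum_subset hsub (fun y hy hy2 => ?_)]
      · exact Finset.sum_congr rfl (fun y _ => by ring)
      · have : Qp p y z = 0 := by
          rw [hT, Finset.mem_Icc] at hy
          rw [Finset.mem_Icc] at hy2
          unfold Qp
          rw [if_neg (by push_cast; omega)]
        rw [this]
        simp
    rw [Finset.sum_congr rfl h2, Finset.sum_comm]
    have h3 : ∀ y ∈ T, (∑ z ∈ S, (Qp 1 x y : ℂ) * ((Qp p y z : ℂ) *
          Psi t₁ t₂ t₃ γ α β r j y₀ z))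
        = (Qp 1 x y : ℂ) * Psi t₁ t₂ t₃ γ α β r (j - p) y₀ y := by
      intro y hy
      rw [hT, Finset.mem_Icc] at hy
      rw [← Finset.mul_sum]
      congr 1
      have hv2 : ∀ z ∉ S, (Qp p y z : ℂ) * Psi t₁ t₂ t₃ γ α β r j y₀ z = 0 := by
        intro z hz
        rw [hS, Finset.mem_Icc] at hz
        push_neg at hz
        rcases le_or_gt z (x - (p:ℤ) - 1) with h | h
        · rw [psi_zero t₁ t₂ t₃ γ β hr hα hrα j y₀ z (by omega), mul_zero]
        · have h0 : Qp p y z = 0 := by unfold Qp; rw [if_neg (by push_cast; omega)]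
          rw [h0]; simp
      rw [← tsum_eq_sum (L := SummationFilter.unconditional ℤ) hv2]
      exact IH j (by omega) y y₀
    rw [Finset.sum_congr rfl h3]
    have hv3 : ∀ y ∉ T, (Qp 1 x y : ℂ) * Psi t₁ t₂ t₃ γ α β r (j - p) y₀ y = 0 := by
      intro y hy
      rw [hT, Finset.mem_Icc] at hy
      push_neg at hy
      rcases le_or_gt y (x-1) with h | h
      · rw [psi_zero t₁ t₂ t₃ γ β hr hα hrα (j-p) y₀ y (by omega), mul_zero]
      · have h0 : Qp 1 x y = 0 := by unfold Qp; rw [if_neg (by push_cast; omega)]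
        rw [h0]; simp
    rw [← tsum_eq_sum (L := SummationFilter.unconditional ℤ) hv3, show j - p = (j - (p+1)) + 1 from by omega,
      base t₁ t₂ t₃ γ β hr hα hrα (j - (p+1)) x y₀]


/-- `Ψ_j[y₀](z) = 0` for `z ≤ y₀ − j − 1`, and the semigroup relation
`Q^{n-m} Ψ^n_{n-k} = Ψ^m_{m-k}` holds, i.e.
`Σ_z Q^{n-m}(x,z) Ψ_{n-k}[y₀](z) = Ψ_{m-k}[y₀](x)` for `1 ≤ m < n`, `0 ≤ k ≤ m`. -/
theorem statement11 (t₁ t₂ : ℕ) (t₃ γ : ℝ) (ht₃ : 0 ≤ t₃) (hγ : 0 ≤ γ)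
    (α β : ℕ → ℝ)
    (hα : ∀ j ∈ Finset.Icc 1 t₁, 0 ≤ α j ∧ α j < 1)
    (hβ : ∀ j ∈ Finset.Icc (t₁ + 1) (t₁ + t₂), 0 ≤ β j)
    (r : ℝ) (hr : 0 < r) (hrα : ∀ j ∈ Finset.Icc 1 t₁, r * α j < 1) :
    (∀ (j : ℕ) (y₀ z : ℤ), z ≤ y₀ - j - 1 → Psi t₁ t₂ t₃ γ α β r j y₀ z = 0) ∧
    (∀ m n k : ℕ, 1 ≤ m → m < n → k ≤ m → ∀ x y₀ : ℤ,
      (∑' z : ℤ, (Qp (n - m) x z : ℂ) * Psi t₁ t₂ t₃ γ α β r (n - k) y₀ z)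
        = Psi t₁ t₂ t₃ γ α β r (m - k) y₀ x) := by
  have hα' : ∀ j ∈ Finset.Icc 1 t₁, 0 ≤ α j := fun j hj => (hα j hj).1
  constructor
  · intro j y₀ z hz
    exact psi_zero t₁ t₂ t₃ γ β hr hα' hrα j y₀ z hz
  · intro m n k hm hmn hk x y₀
    have h := key t₁ t₂ t₃ γ β hr hα' hrα (n-m) (by omega) (n-k) (by omega) x y₀
    rwa [show n - k - (n - m) = m - k from by omega] at h
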